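/- A quadratic normalisation (A, N) is of left-class m if and only if N̄_{12[m]} = N̄_{12[m+1]} = N̄_{21[m+1]} on A³, where 12[k] denotes the alternating sequence 1,2,1,... of length k and 21[k] the alternating sequence 2,1,2,... of length k. -/
import Mathlib


/-- Apply `N` to the length-two factor of `w` at positions `i, i+1` (1-indexed). -/
def applyAt {A : Type*} (N : List A → List A) (i : ℕ) (w : List A) : List A :=
  w.take (i - 1) ++ N ((w.drop (i - 1)).take 2) ++ w.drop (i + 1)

/-- Apply `N` to length-two factors at the given sequence of positions,
leftmost position in the list applied first. -/
def applySeq {A : Type*} (N : List A → List A) (pos : List ℕ) (w : List A) : List A :=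
  pos.foldl (fun v i => applyAt N i v) w

/-- The alternating sequence of positions `s, 3-s, s, ...` of length `k` (with `s ∈ {1,2}`). -/
def altSeq : ℕ → ℕ → List ℕ
  | _, 0 => []
  | s, k + 1 => s :: altSeq (3 - s) k

/-- A quadratic normalisation: a length-preserving map, identity on letters,
satisfying `N(u|v|w) = N(u|N(v)|w)`, for which a word is normal iff all its
length-two factors are, and which is computed by finitely many applications
of its restriction to length-two factors. -/
structure QuadraticNormalisation {A : Type*} (N : List A → List A) : Prop where
  len : ∀ w : List A, (N w).length = w.length
  letter : ∀ a : A, N [a] = [a]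
  mid : ∀ u v w : List A, N (u ++ v ++ w) = N (u ++ N v ++ w)
  normal_iff : ∀ w : List A, N w = w ↔
    ∀ (u v : List A) (a b : A), w = u ++ a :: b :: v → N [a, b] = [a, b]
  reach : ∀ w : List A, ∃ pos : List ℕ, N w = applySeq N pos w

/-- The normalisation is of left-class `m`. -/
def LeftClass {A : Type*} (N : List A → List A) (m : ℕ) : Prop :=
  ∀ w : List A, w.length = 3 → N w = applySeq N (altSeq 1 m) w

/-- The normalisation is of right-class `n`. -/
def RightClass {A : Type*} (N : List A → List A) (n : ℕ) : Prop :=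
  ∀ w : List A, w.length = 3 → N w = applySeq N (altSeq 2 n) w

/-- The normalisation is of class `(m, n)`. -/
def IsClass {A : Type*} (N : List A → List A) (m n : ℕ) : Prop :=
  LeftClass N m ∧ RightClass N n

/-- `e` is an `N`-neutral element: `N(w|e) = N(e|w) = N(w)|e` for every word `w`. -/
def Neutral {A : Type*} (N : List A → List A) (e : A) : Prop :=
  ∀ w : List A, N (w ++ [e]) = N w ++ [e] ∧ N (e :: w) = N w ++ [e]

section Aux

variable {A : Type*} {N : List A → List A} (hN : QuadraticNormalisation N)
include hN

lemma N_idem (v : List A) : N (N v) = N v := by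
  have h := hN.mid [] v []
  simpa using h.symm

lemma N_two (a b : A) : ∃ a' b', N [a, b] = [a', b'] := by
  have h : (N [a, b]).length = 2 := by simp [hN.len]
  rcases List.length_eq_two.mp h with ⟨a', b', h⟩
  exact ⟨a', b', h⟩

omit hN in
lemma applyAt_one (a b c : A) : applyAt N 1 [a, b, c] = N [a, b] ++ [c] := by
  simp [applyAt]

omit hN in
lemma applyAt_two (a b c : A) : applyAt N 2 [a, b, c] = a :: N [b, c] := by
  simp [applyAt]

lemma N_applyAt_one (a b c : A) : N (applyAt N 1 [a, b, c]) = N [a, b, c] := by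
  rw [applyAt_one]
  have h := hN.mid [] [a, b] [c]
  simpa using h.symm

lemma N_applyAt_two (a b c : A) : N (applyAt N 2 [a, b, c]) = N [a, b, c] := by
  rw [applyAt_two]
  have h := hN.mid [a] [b, c] []
  simpa using h.symm

lemma applyAt_len (i : ℕ) (hi : i = 1 ∨ i = 2) (a b c : A) :
    (applyAt N i [a, b, c]).length = 3 := by
  obtain ⟨a', b', h1⟩ := N_two hN a b
  obtain ⟨b'', c', h2⟩ := N_two hN b c
  rcases hi with rfl | rfl
  · rw [applyAt_one, h1]; rfl
  · rw [applyAt_two, h2]; rfl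

lemma normal_of_fixed (a b c : A) (h1 : applyAt N 1 [a, b, c] = [a, b, c])
    (h2 : applyAt N 2 [a, b, c] = [a, b, c]) : N [a, b, c] = [a, b, c] := by
  rw [applyAt_one] at h1
  rw [applyAt_two] at h2
  obtain ⟨a', b', hab⟩ := N_two hN a b
  obtain ⟨b'', c', hbc⟩ := N_two hN b c
  rw [hab] at h1; rw [hbc] at h2
  simp at h1 h2
  obtain ⟨rfl, rfl, -⟩ := h1
  obtain ⟨rfl, rfl⟩ := h2
  apply (hN.normal_iff _).mpr
  intro u v x y hw
  rcases u with _ | ⟨p, _ | ⟨q, u⟩⟩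
  · simp at hw
    obtain ⟨rfl, rfl, -⟩ := hw
    exact hab
  · simp at hw
    obtain ⟨-, rfl, rfl, -⟩ := hw
    exact hbc
  · exfalso
    have := congrArg List.length hw
    simp at this
    omega

lemma fixed_of_normal (a b c : A) (h : N [a, b, c] = [a, b, c]) :
    applyAt N 1 [a, b, c] = [a, b, c] ∧ applyAt N 2 [a, b, c] = [a, b, c] := by
  have hall := (hN.normal_iff _).mp h
  have hab : N [a, b] = [a, b] := hall [] [c] a b rfl
  have hbc : N [b, c] = [b, c] := hall [a] [] b c rfl
  rw [applyAt_one, applyAt_two, hab, hbc]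
  exact ⟨rfl, rfl⟩

lemma applyAt_idem (i : ℕ) (hi : i = 1 ∨ i = 2) (a b c : A) :
    applyAt N i (applyAt N i [a, b, c]) = applyAt N i [a, b, c] := by
  obtain ⟨a', b', hab⟩ := N_two hN a b
  obtain ⟨b'', c', hbc⟩ := N_two hN b c
  rcases hi with rfl | rfl
  · rw [applyAt_one, hab]
    show applyAt N 1 [a', b', c] = _
    rw [applyAt_one, ← hab, N_idem hN, hab]
  · rw [applyAt_two, hbc]
    show applyAt N 2 [a, b'', c'] = _
    rw [applyAt_two, ← hbc, N_idem hN, hbc]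

omit hN in
lemma applySeq_cons (i : ℕ) (pos : List ℕ) (w : List A) :
    applySeq N (i :: pos) w = applySeq N pos (applyAt N i w) := rfl

omit hN in
lemma applySeq_snoc (i : ℕ) (pos : List ℕ) (w : List A) :
    applySeq N (pos ++ [i]) w = applyAt N i (applySeq N pos w) := by
  simp [applySeq]

lemma applySeq_props (pos : List ℕ) (hpos : ∀ i ∈ pos, i = 1 ∨ i = 2)
    (w : List A) (hw : w.length = 3) :
    N (applySeq N pos w) = N w ∧ (applySeq N pos w).length = 3 := by
  induction pos generalizing w with
  | nil => exact ⟨rfl, hw⟩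
  | cons i pos ih =>
    obtain ⟨a, b, c, rfl⟩ := List.length_eq_three.mp hw
    have hi := hpos i (by simp)
    have h1 : N (applyAt N i [a, b, c]) = N [a, b, c] := by
      rcases hi with rfl | rfl
      · exact N_applyAt_one hN a b c
      · exact N_applyAt_two hN a b c
    have h2 := applyAt_len hN i hi a b c
    rw [applySeq_cons]
    obtain ⟨ha, hb⟩ := ih (fun j hj => hpos j (by simp [hj])) _ h2
    exact ⟨ha.trans h1, hb⟩

omit hN in
lemma altSeq_mem : ∀ (k s : ℕ), (s = 1 ∨ s = 2) → ∀ i ∈ altSeq s k, i = 1 ∨ i = 2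
  | 0, _, _ => by simp [altSeq]
  | k + 1, s, hs => by
    intro i hi
    rw [altSeq] at hi
    rcases List.mem_cons.mp hi with rfl | hi
    · exact hs
    · exact altSeq_mem k (3 - s) (by omega) i hi

omit hN in
lemma altSeq_snoc : ∀ (k s : ℕ), s ≤ 3 →
    altSeq s (k + 1) = altSeq s k ++ [if k % 2 = 0 then s else 3 - s]
  | 0, s, _ => by simp [altSeq]
  | k + 1, s, hs => by
    rw [altSeq, altSeq_snoc k (3 - s) (by omega), altSeq]
    have h : (if k % 2 = 0 then 3 - s else 3 - (3 - s)) =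
        (if (k + 1) % 2 = 0 then s else 3 - s) := by
      rcases Nat.mod_two_eq_zero_or_one k with hk | hk
      · have hk1 : (k + 1) % 2 = 1 := by omega
        simp [hk, hk1]
      · have hk1 : (k + 1) % 2 = 0 := by omega
        simp [hk, hk1]
        omega
    rw [h]
    rfl

end Aux


/-- a quadratic normalisation is of left-class `m` iff
`N̄_{12[m]} = N̄_{12[m+1]} = N̄_{21[m+1]}` on length-three words. -/
theorem leftClass_iff {A : Type*} (N : List A → List A)
    (hN : QuadraticNormalisation N) (m : ℕ) :
    LeftClass N m ↔
      ∀ w : List A, w.length = 3 →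
        applySeq N (altSeq 1 m) w = applySeq N (altSeq 1 (m + 1)) w ∧
        applySeq N (altSeq 1 m) w = applySeq N (altSeq 2 (m + 1)) w := by
  constructor
  · intro hL w hw
    have hlen : (N w).length = 3 := by rw [hN.len]; exact hw
    obtain ⟨a, b, c, hNw⟩ := List.length_eq_three.mp hlen
    have hfix := fixed_of_normal hN a b c (by rw [← hNw, N_idem hN])
    constructor
    · rw [altSeq_snoc m 1 (by omega), applySeq_snoc, ← hL w hw, hNw]
      rcases Nat.mod_two_eq_zero_or_one m with hm | hm
      · rw [if_pos hm]
        exact hfix.1.symm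
      · rw [if_neg (by omega)]
        exact hfix.2.symm
    · have halt : altSeq 2 (m + 1) = 2 :: altSeq 1 m := rfl
      rw [halt, applySeq_cons]
      obtain ⟨a₀, b₀, c₀, rfl⟩ := List.length_eq_three.mp hw
      have h2len : (applyAt N 2 [a₀, b₀, c₀]).length = 3 :=
        applyAt_len hN 2 (Or.inr rfl) a₀ b₀ c₀
      rw [← hL _ h2len, ← hL _ hw, N_applyAt_two hN]
  · intro h w hw
    have hmem := altSeq_mem m 1 (Or.inl rfl)
    obtain ⟨hNu, hulen⟩ := applySeq_props hN (altSeq 1 m) hmem w hw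
    set u := applySeq N (altSeq 1 m) w with hu
    obtain ⟨a, b, c, hu3⟩ := List.length_eq_three.mp hulen
    obtain ⟨ha, hb⟩ := h w hw
    rw [altSeq_snoc m 1 (by omega), applySeq_snoc, ← hu] at ha
    -- `u` is fixed by `applyAt` at the position following the alternating sequence
    have hs1 : ∀ s : ℕ, (if m % 2 = 0 then 1 else 3 - 1) = s → applyAt N s u = u :=
      fun s hs => by rw [← hs]; exact ha.symm
    rcases m with _ | k
    · -- m = 0
      have h1 : applyAt N 1 u = u := hs1 1 rfl
      have hu0 : u = w := rfl
      have hb2 : applyAt N 2 u = u := by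
        rw [hu0]
        rw [show altSeq 2 1 = [2] from rfl] at hb
        exact hb.symm
      have hn : N u = u := by
        rw [hu3] at h1 hb2 ⊢
        exact normal_of_fixed hN a b c h1 hb2
      rw [← hNu, hn]
    · -- m = k + 1
      obtain ⟨a', b', c', hv3⟩ := List.length_eq_three.mp
        ((applySeq_props hN (altSeq 1 k) (altSeq_mem k 1 (Or.inl rfl)) w hw).2)
      have hsnoc : applySeq N (altSeq 1 (k + 1)) w
          = applyAt N (if k % 2 = 0 then 1 else 3 - 1) (applySeq N (altSeq 1 k) w) := by
        rw [altSeq_snoc k 1 (by omega), applySeq_snoc]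
      have h1 : applyAt N 1 u = u ∧ applyAt N 2 u = u := by
        rcases Nat.mod_two_eq_zero_or_one k with hk | hk
        · have hk1 : (k + 1) % 2 = 1 := by omega
          refine ⟨?_, hs1 2 (by rw [if_neg (by omega)])⟩
          rw [hu, hsnoc, if_pos hk, hv3]
          exact applyAt_idem hN 1 (Or.inl rfl) a' b' c'
        · have hk1 : (k + 1) % 2 = 0 := by omega
          refine ⟨hs1 1 (by rw [if_pos hk1]), ?_⟩
          rw [hu, hsnoc, if_neg (by omega), hv3]
          exact applyAt_idem hN (3 - 1) (Or.inr rfl) a' b' c'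
      obtain ⟨hf1, hf2⟩ := h1
      rw [hu3] at hf1 hf2
      have hn := normal_of_fixed hN a b c hf1 hf2
      rw [← hNu, hu3, hn]
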